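/- Let b > 0, α > 0, and u ∈ ℝ. The function y ↦ (y − b·log y) + (α/2)(y − u/α)² on (0, ∞) has a unique minimizer y⋆, and it satisfies u − α y⋆ = 1 + ( u − 1 − √((u − 1)² + 4αb) ) / 2. (This is the closed-form expression S(u; αb) for the proximal operator of the scaled conjugate of the Poisson negative log-likelihood ℓ(y; b) = y − b log y used in the PET reconstruction update.) -/

import Mathlib

theorem poisson_prox_closed_form
    (b α u : ℝ) (hb : 0 < b) (hα : 0 < α) :
    ∃ ystar : ℝ, ystar ∈ Set.Ioi (0 : ℝ) ∧
      IsMinOn (fun y : ℝ => (y - b * Real.log y) + (α / 2) * (y - u / α) ^ 2)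
        (Set.Ioi (0 : ℝ)) ystar ∧
      (∀ y ∈ Set.Ioi (0 : ℝ),
        IsMinOn (fun y : ℝ => (y - b * Real.log y) + (α / 2) * (y - u / α) ^ 2)
          (Set.Ioi (0 : ℝ)) y → y = ystar) ∧
      u - α * ystar = 1 + (u - 1 - Real.sqrt ((u - 1) ^ 2 + 4 * (α * b))) / 2 := by
  set s : ℝ := Real.sqrt ((u - 1) ^ 2 + 4 * (α * b)) with hs_def
  have hD : (0:ℝ) ≤ (u - 1) ^ 2 + 4 * (α * b) := by positivity
  have hs2 : s ^ 2 = (u - 1) ^ 2 + 4 * (α * b) := Real.sq_sqrt hD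
  have hs0 : 0 ≤ s := Real.sqrt_nonneg _
  set ystar : ℝ := (u - 1 + s) / (2 * α) with hy_def
  have hab : 0 < α * b := mul_pos hα hb
  have hpos : 0 < u - 1 + s := by nlinarith [hs2, hs0, hab, sq_nonneg (s - (u - 1))]
  have hy : 0 < ystar := by
    apply div_pos hpos; linarith
  have hstat : α * ystar ^ 2 + (1 - u) * ystar = b := by
    have hα' : α ≠ 0 := ne_of_gt hα
    field_simp [hy_def]
    rw [hy_def]; field_simp; nlinarith [hs2]
  have hexp : ∀ z : ℝ, (α / 2) * (z - u / α) ^ 2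
      = (α / 2) * z ^ 2 - u * z + u ^ 2 / (2 * α) := by
    intro z
    field_simp
    ring
  have key : ∀ y ∈ Set.Ioi (0 : ℝ),
      (ystar - b * Real.log ystar) + (α / 2) * (ystar - u / α) ^ 2
        + (α / 2) * (y - ystar) ^ 2
      ≤ (y - b * Real.log y) + (α / 2) * (y - u / α) ^ 2 := by
    intro y hyy
    have hy' : (0:ℝ) < y := hyy
    have hlog : Real.log y - Real.log ystar ≤ (y - ystar) / ystar := by
      have h1 : Real.log (y / ystar) ≤ y / ystar - 1 :=
        Real.log_le_sub_one_of_pos (div_pos hy' hy)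
      rw [Real.log_div (ne_of_gt hy') (ne_of_gt hy)] at h1
      have : y / ystar - 1 = (y - ystar) / ystar := by
        field_simp
      linarith [this ▸ h1]
    have hkey : (Real.log y - Real.log ystar) * ystar ≤ y - ystar := by
      have := (div_le_div_iff_of_pos_right hy).mpr hlog
      calc (Real.log y - Real.log ystar) * ystar
          ≤ ((y - ystar) / ystar) * ystar := by
            exact mul_le_mul_of_nonneg_right hlog hy.le
        _ = y - ystar := by field_simp
    have H1 : b * ((Real.log y - Real.log ystar) * ystar) ≤ b * (y - ystar) :=
      mul_le_mul_of_nonneg_left hkey hb.le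
    rw [hexp y, hexp ystar]
    nlinarith [H1, hstat, sq_nonneg (y - ystar), mul_pos hα hy,
      mul_nonneg (mul_nonneg hα.le hy.le) (sq_nonneg (y - ystar)), hy, hy']
  refine ⟨ystar, hy, ?_, ?_, ?_⟩
  · intro y hyy
    have := key y hyy
    simp only [Set.mem_setOf_eq]
    nlinarith [sq_nonneg (y - ystar)]
  · intro y hyy hmin
    have h1 := key y hyy
    have h2 := hmin hy
    simp only [Set.mem_setOf_eq] at h2
    have hsq : (α / 2) * (y - ystar) ^ 2 ≤ 0 := by linarith
    have : (y - ystar) ^ 2 ≤ 0 := by nlinarith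
    have : (y - ystar) ^ 2 = 0 := le_antisymm this (sq_nonneg _)
    have := pow_eq_zero_iff (n := 2) (by norm_num) |>.mp this
    linarith
  · have hαy : α * ystar = (u - 1 + s) / 2 := by
      rw [hy_def]
      field_simp
    rw [hαy]
    ring
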